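/- For the Euler-kernel approximation problem under the normalized error criterion, the problem is strongly polynomially tractable if and only if it is polynomially tractable. -/

import Mathlib

open Filter Real Set

/-- Information complexity: the number of multi-indices `(j₁,…,j_d) ∈ ℕ^d`
(here 0-indexed, so `Λ k j` stands for `λ(k+1, j+1)`) whose eigenvalue product exceeds `ε²`. -/
noncomputable def infoCount (Λ : ℕ → ℕ → ℝ) (d : ℕ) (ε : ℝ) : ℕ :=
  Nat.card {j : Fin d → ℕ | ε ^ 2 < ∏ k : Fin d, Λ k.val (j k)}

/-- Strong polynomial tractability. -/
def IsSPT (Λ : ℕ → ℕ → ℝ) : Prop :=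
  ∃ C p : ℝ, 0 ≤ C ∧ 0 ≤ p ∧ ∀ d : ℕ, 1 ≤ d → ∀ ε : ℝ, ε ∈ Set.Ioo (0 : ℝ) 1 →
    (infoCount Λ d ε : ℝ) ≤ C * ε ^ (-p)

/-- The exponent `p*` of strong polynomial tractability. -/
noncomputable def sptExponent (Λ : ℕ → ℕ → ℝ) : ℝ :=
  sInf {p : ℝ | 0 ≤ p ∧ ∃ C : ℝ, 0 ≤ C ∧ ∀ d : ℕ, 1 ≤ d → ∀ ε : ℝ, ε ∈ Set.Ioo (0 : ℝ) 1 →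
    (infoCount Λ d ε : ℝ) ≤ C * ε ^ (-p)}

/-- Polynomial tractability. -/
def IsPT (Λ : ℕ → ℕ → ℝ) : Prop :=
  ∃ C p q : ℝ, 0 ≤ C ∧ 0 ≤ p ∧ 0 ≤ q ∧ ∀ d : ℕ, 1 ≤ d → ∀ ε : ℝ, ε ∈ Set.Ioo (0 : ℝ) 1 →
    (infoCount Λ d ε : ℝ) ≤ C * (d : ℝ) ^ q * ε ^ (-p)

/-- Quasi-polynomial tractability. -/
def IsQPT (Λ : ℕ → ℕ → ℝ) : Prop :=
  ∃ C t : ℝ, 0 < C ∧ 0 < t ∧ ∀ d : ℕ, 1 ≤ d → ∀ ε : ℝ, ε ∈ Set.Ioo (0 : ℝ) 1 →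
    (infoCount Λ d ε : ℝ) ≤ C * Real.exp (t * (1 + Real.log d) * (1 + Real.log ε⁻¹))

/-- The exponent `t*` of quasi-polynomial tractability. -/
noncomputable def qptExponent (Λ : ℕ → ℕ → ℝ) : ℝ :=
  sInf {t : ℝ | 0 < t ∧ ∃ C : ℝ, 0 < C ∧ ∀ d : ℕ, 1 ≤ d → ∀ ε : ℝ, ε ∈ Set.Ioo (0 : ℝ) 1 →
    (infoCount Λ d ε : ℝ) ≤ C * Real.exp (t * (1 + Real.log d) * (1 + Real.log ε⁻¹))}

/-- The filter describing `ε⁻¹ + d → ∞` over pairs `(ε, d)` with `ε ∈ (0,1)` and `d ≥ 1`. -/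
noncomputable def wtFilter : Filter (ℝ × ℕ) :=
  (Filter.comap (fun p : ℝ × ℕ => p.1⁻¹ + (p.2 : ℝ)) Filter.atTop) ⊓
    Filter.principal {p : ℝ × ℕ | p.1 ∈ Set.Ioo (0 : ℝ) 1 ∧ 1 ≤ p.2}

/-- `(s,t)`-weak tractability: `ln n(ε,d) / (ε^{-s} + d^t) → 0` as `ε⁻¹ + d → ∞`. -/
def IsWT (Λ : ℕ → ℕ → ℝ) (s t : ℝ) : Prop :=
  Filter.Tendsto
    (fun p : ℝ × ℕ => Real.log (infoCount Λ p.2 p.1) / (p.1 ^ (-s) + (p.2 : ℝ) ^ t))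
    wtFilter (nhds 0)

/-- Uniform weak tractability. -/
def IsUWT (Λ : ℕ → ℕ → ℝ) : Prop := ∀ s t : ℝ, 0 < s → 0 < t → IsWT Λ s t

/-- The problem suffers from the curse of dimensionality. -/
def SuffersCurse (Λ : ℕ → ℕ → ℝ) : Prop :=
  ∃ C ε₀ α : ℝ, 0 < C ∧ 0 < ε₀ ∧ 0 < α ∧ ∀ ε : ℝ, 0 < ε → ε ≤ ε₀ →
    {d : ℕ | C * (1 + α) ^ d ≤ (infoCount Λ d ε : ℝ)}.Infinite

/-- Condition (3) of Property (P) for a given `τ > 0`: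
`H(k,τ) = ∑_{j≥2} (λ(k,j)/λ(k,2))^τ` is finite for each `k` and
`sup_k H(k,τ) = H(1,τ)` (equivalently `H(k,τ) ≤ H(1,τ)` for all `k`). -/
def Cond3 (Λ : ℕ → ℕ → ℝ) (τ : ℝ) : Prop :=
  0 < τ ∧ (∀ k, Summable fun j : ℕ => (Λ k (j + 1) / Λ k 1) ^ τ) ∧
    ∀ k, (∑' j : ℕ, (Λ k (j + 1) / Λ k 1) ^ τ) ≤ ∑' j : ℕ, (Λ 0 (j + 1) / Λ 0 1) ^ τ

/-- `τ₀`: the infimum of all `τ` satisfying Condition (3). -/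
noncomputable def tau0 (Λ : ℕ → ℕ → ℝ) : ℝ := sInf {τ : ℝ | Cond3 Λ τ}

/-- Property (P): each sequence `λ(k,·)` is nonincreasing and nonnegative with `λ(k,1) = 1`
and `λ(k,2) > 0`, `h_k = λ(k,2)` is nonincreasing, and Condition (3) holds for some `τ > 0`. -/
structure PropertyP (Λ : ℕ → ℕ → ℝ) : Prop where
  nonneg : ∀ k j, 0 ≤ Λ k j
  anti : ∀ k, Antitone (Λ k)
  first : ∀ k, Λ k 0 = 1
  second_pos : ∀ k, 0 < Λ k 1
  h_anti : Antitone fun k => Λ k 1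
  cond3 : ∃ τ : ℝ, Cond3 Λ τ


/-- Normalized eigenvalues of the Euler-kernel problem: `λ(k,j)/λ(k,1) = (2j-1)^{-(2r_k+2)}`
(0-indexed: `eulerLam r k j = (2(j+1)-1)^{-(2 r_{k+1} + 2)}`). -/
noncomputable def eulerLam (r : ℕ → ℕ) (k j : ℕ) : ℝ :=
  ((2 * (j : ℝ) + 1) ^ (2 * r k + 2))⁻¹

set_option maxHeartbeats 1000000

lemma one_le_base (j : ℕ) : (1:ℝ) ≤ 2 * (j:ℝ) + 1 := by
  have := Nat.cast_nonneg (α := ℝ) j; linarith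

lemma eulerLam_pos (r : ℕ → ℕ) (k j : ℕ) : 0 < eulerLam r k j := by
  have := one_le_base j
  unfold eulerLam; positivity

lemma eulerLam_le_one (r : ℕ → ℕ) (k j : ℕ) : eulerLam r k j ≤ 1 := by
  rw [eulerLam, inv_le_one_iff₀]
  right
  exact one_le_pow₀ (one_le_base j)

lemma eulerLam_one (r : ℕ → ℕ) (k : ℕ) :
    eulerLam r k 1 = ((3:ℝ) ^ (2 * r k + 2))⁻¹ := by
  norm_num [eulerLam]

lemma eulerLam_pow (r : ℕ → ℕ) (k j τ : ℕ) :
    eulerLam r k j ^ τ = ((2 * (j:ℝ) + 1) ^ ((2 * r k + 2) * τ))⁻¹ := by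
  rw [eulerLam, inv_pow, ← pow_mul]

lemma prod_le_factor {d : ℕ} (f : Fin d → ℝ) (h0 : ∀ i, 0 ≤ f i) (h1 : ∀ i, f i ≤ 1)
    (k : Fin d) : ∏ i, f i ≤ f k := by
  rw [← Finset.mul_prod_erase Finset.univ f (Finset.mem_univ k)]
  calc f k * ∏ x ∈ Finset.univ.erase k, f x ≤ f k * 1 := by
        apply mul_le_mul_of_nonneg_left _ (h0 k)
        exact Finset.prod_le_one (fun i _ => h0 i) (fun i _ => h1 i)
    _ = f k := mul_one _

lemma euler_coord_lt (r : ℕ → ℕ) {d : ℕ} {ε : ℝ} (hε : 0 < ε) {j : Fin d → ℕ}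
    (hj : ε ^ 2 < ∏ k : Fin d, eulerLam r k.val (j k)) (k : Fin d) : j k < ⌈ε⁻¹ ^ 2⌉₊ := by
  have h1 : ε^2 < eulerLam r k.val (j k) :=
    lt_of_lt_of_le hj (prod_le_factor _ (fun i => (eulerLam_pos r i.val (j i)).le)
      (fun i => eulerLam_le_one r i.val (j i)) k)
  rw [eulerLam] at h1
  have hb : (0:ℝ) < (2 * (j k : ℝ) + 1) ^ (2 * r k.val + 2) := by
    have := one_le_base (j k); positivity
  have h2 : (2 * (j k : ℝ) + 1) ^ (2 * r k.val + 2) < (ε^2)⁻¹ :=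
    (lt_inv_comm₀ (by positivity : (0:ℝ) < ε^2) hb).mp h1
  have h3 : (j k : ℝ) ≤ (2 * (j k : ℝ) + 1) ^ (2 * r k.val + 2) := by
    calc (j k : ℝ) ≤ 2 * (j k : ℝ) + 1 := by linarith [Nat.cast_nonneg (α := ℝ) (j k)]
      _ ≤ _ := le_self_pow₀ (one_le_base (j k)) (by omega)
  have h4 : (j k : ℝ) < ε⁻¹ ^ 2 := by
    rw [inv_pow]
    exact lt_of_le_of_lt h3 h2
  have h5 : (j k : ℝ) < (⌈ε⁻¹^2⌉₊ : ℝ) := lt_of_lt_of_le h4 (Nat.le_ceil _)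
  exact_mod_cast h5

lemma euler_set_finite (r : ℕ → ℕ) (d : ℕ) {ε : ℝ} (hε : 0 < ε) :
    {j : Fin d → ℕ | ε ^ 2 < ∏ k : Fin d, eulerLam r k.val (j k)}.Finite := by
  apply Set.Finite.subset (Set.Finite.pi (fun _ : Fin d => Set.finite_Iio (⌈ε⁻¹^2⌉₊)))
  intro j hj
  simp only [Set.mem_pi, Set.mem_univ, Set.mem_Iio, forall_true_left]
  exact fun k => euler_coord_lt r hε hj k

lemma summable_aux {E : ℕ} (hE : 2 ≤ E) :
    Summable (fun j : ℕ => ((2 * (j:ℝ) + 1) ^ E)⁻¹) := by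
  have hs : Summable (fun j : ℕ => (((j:ℝ) + 1) ^ 2)⁻¹) := by
    have := (Real.summable_one_div_nat_pow (p := 2)).2 (by norm_num)
    have := (summable_nat_add_iff 1).2 this
    simpa [one_div] using this
  apply Summable.of_nonneg_of_le (fun j => by positivity) (fun j => ?_) hs
  apply inv_anti₀ (by positivity)
  calc ((j:ℝ) + 1) ^ 2 ≤ (2 * (j:ℝ) + 1) ^ 2 := by
        apply pow_le_pow_left₀ (by positivity); linarith [Nat.cast_nonneg (α := ℝ) j]
    _ ≤ (2 * (j:ℝ) + 1) ^ E := pow_le_pow_right₀ (one_le_base j) hE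

noncomputable def baselB : ℝ := ∑' j : ℕ, (((j:ℝ) + 1) ^ 2)⁻¹

lemma baselB_summable : Summable (fun j : ℕ => (((j:ℝ) + 1) ^ 2)⁻¹) := by
  have := (Real.summable_one_div_nat_pow (p := 2)).2 (by norm_num)
  have := (summable_nat_add_iff 1).2 this
  simpa [one_div] using this

lemma baselB_nonneg : 0 ≤ baselB := tsum_nonneg (fun j => by positivity)

lemma euler_summable (r : ℕ → ℕ) (k τ : ℕ) (hτ : 1 ≤ τ) :
    Summable (fun j : ℕ => eulerLam r k j ^ τ) := by
  simp only [eulerLam_pow]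
  exact summable_aux (by nlinarith)

lemma euler_tsum_le (r : ℕ → ℕ) (k τ : ℕ) (hτ : 1 ≤ τ) :
    ∑' j : ℕ, eulerLam r k j ^ τ ≤ 1 + baselB * (((9:ℝ) ^ (r k * τ))⁻¹) := by
  rw [Summable.tsum_eq_zero_add (euler_summable r k τ hτ)]
  have h0 : eulerLam r k 0 ^ τ = 1 := by simp [eulerLam]
  rw [h0]
  gcongr 1 + ?_
  have hterm : ∀ j : ℕ, eulerLam r k (j + 1) ^ τ ≤
      ((9:ℝ) ^ (r k * τ))⁻¹ * (((j:ℝ) + 1) ^ 2)⁻¹ := by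
    intro j
    rw [eulerLam_pow]
    have hx : (2 * ((j+1:ℕ):ℝ) + 1) = 2 * (j:ℝ) + 3 := by push_cast; ring
    rw [hx, ← mul_inv]
    apply inv_anti₀ (by positivity)
    have hsplit : (2 * (j:ℝ) + 3) ^ ((2 * r k + 2) * τ)
        = (2 * (j:ℝ) + 3) ^ (2 * (r k * τ)) * (2 * (j:ℝ) + 3) ^ (2 * τ) := by
      rw [← pow_add]; ring_nf
    rw [hsplit]
    have hb3 : (3:ℝ) ≤ 2 * (j:ℝ) + 3 := by linarith [Nat.cast_nonneg (α := ℝ) j]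
    have h1 : (9:ℝ) ^ (r k * τ) ≤ (2 * (j:ℝ) + 3) ^ (2 * (r k * τ)) := by
      have h9 : (9:ℝ) ^ (r k * τ) = (3:ℝ) ^ (2 * (r k * τ)) := by
        rw [show (9:ℝ) = 3^2 by norm_num, ← pow_mul]
      rw [h9]
      exact pow_le_pow_left₀ (by norm_num) hb3 _
    have h2 : ((j:ℝ) + 1) ^ 2 ≤ (2 * (j:ℝ) + 3) ^ (2 * τ) := by
      calc ((j:ℝ) + 1) ^ 2 ≤ (2 * (j:ℝ) + 3) ^ 2 := by
            apply pow_le_pow_left₀ (by positivity); linarith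
        _ ≤ (2 * (j:ℝ) + 3) ^ (2 * τ) := pow_le_pow_right₀ (by linarith) (by omega)
    have hp1 : (0:ℝ) ≤ (9:ℝ) ^ (r k * τ) := by positivity
    have hp2 : (0:ℝ) ≤ ((j:ℝ) + 1) ^ 2 := by positivity
    exact mul_le_mul h1 h2 hp2 (by positivity)
  calc ∑' j : ℕ, eulerLam r k (j+1) ^ τ
      ≤ ∑' j : ℕ, ((9:ℝ) ^ (r k * τ))⁻¹ * (((j:ℝ) + 1) ^ 2)⁻¹ := by
        apply Summable.tsum_le_tsum hterm ((summable_nat_add_iff 1).2 (euler_summable r k τ hτ))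
        exact baselB_summable.mul_left _
    _ = ((9:ℝ) ^ (r k * τ))⁻¹ * baselB := by rw [tsum_mul_left]; rfl
    _ = baselB * ((9:ℝ) ^ (r k * τ))⁻¹ := mul_comm _ _

lemma infoCount_le_prod (r : ℕ → ℕ) (τ : ℕ) (hτ : 1 ≤ τ) (d : ℕ) {ε : ℝ} (hε : 0 < ε) :
    (infoCount (eulerLam r) d ε : ℝ) ≤
      (ε ^ (2 * τ))⁻¹ * ∏ k : Fin d, ∑' j : ℕ, eulerLam r k.val j ^ τ := by
  have hS : {j : Fin d → ℕ | ε ^ 2 < ∏ k : Fin d, eulerLam r k.val (j k)}.Finite :=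
    euler_set_finite r d hε
  have hcard : infoCount (eulerLam r) d ε = hS.toFinset.card := by
    rw [infoCount, Nat.card_eq_card_finite_toFinset hS]
  set F := hS.toFinset with hF
  set N := ⌈ε⁻¹ ^ 2⌉₊ with hN
  have hsub : F ⊆ Fintype.piFinset (fun _ : Fin d => Finset.range N) := by
    intro j hj
    rw [hF, Set.Finite.mem_toFinset] at hj
    rw [Fintype.mem_piFinset]
    exact fun k => Finset.mem_range.2 (euler_coord_lt r hε hj k)
  have key : (F.card : ℝ) * ε ^ (2 * τ) ≤ ∏ k : Fin d, ∑' j : ℕ, eulerLam r k.val j ^ τ := by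
    calc (F.card : ℝ) * ε ^ (2*τ)
        ≤ ∑ j ∈ F, ∏ k : Fin d, eulerLam r k.val (j k) ^ τ := by
          have := Finset.card_nsmul_le_sum F
            (fun j => ∏ k : Fin d, eulerLam r k.val (j k) ^ τ) (ε ^ (2*τ)) ?_
          · simpa [nsmul_eq_mul] using this
          · intro j hj
            rw [hF, Set.Finite.mem_toFinset] at hj
            have h1 : ε ^ 2 < ∏ k : Fin d, eulerLam r k.val (j k) := hj
            calc ε ^ (2*τ) = (ε^2)^τ := by rw [pow_mul]
              _ ≤ (∏ k : Fin d, eulerLam r k.val (j k))^τ :=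
                  pow_le_pow_left₀ (by positivity) h1.le τ
              _ = ∏ k : Fin d, eulerLam r k.val (j k) ^ τ := by rw [Finset.prod_pow]
      _ ≤ ∑ j ∈ Fintype.piFinset (fun _ : Fin d => Finset.range N),
            ∏ k : Fin d, eulerLam r k.val (j k) ^ τ := by
          apply Finset.sum_le_sum_of_subset_of_nonneg hsub
          intro j _ _
          apply Finset.prod_nonneg
          intro k _
          exact pow_nonneg (eulerLam_pos r k.val (j k)).le τ
      _ = ∏ k : Fin d, ∑ j ∈ Finset.range N, eulerLam r k.val j ^ τ :=
          (Finset.prod_univ_sum (fun _ : Fin d => Finset.range N)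
            (fun k j => eulerLam r k.val j ^ τ)).symm
      _ ≤ ∏ k : Fin d, ∑' j : ℕ, eulerLam r k.val j ^ τ := by
          apply Finset.prod_le_prod
          · intro k _
            exact Finset.sum_nonneg fun j _ => pow_nonneg (eulerLam_pos r k.val j).le τ
          · intro k _
            exact Summable.sum_le_tsum _ (fun j _ => pow_nonneg (eulerLam_pos r k.val j).le τ)
              (euler_summable r k.val τ hτ)
  rw [hcard]
  have hεp : (0:ℝ) < ε ^ (2*τ) := by positivity
  rw [le_inv_mul_iff₀ hεp]
  calc ε ^ (2*τ) * (F.card : ℝ) = (F.card : ℝ) * ε ^ (2*τ) := mul_comm _ _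
    _ ≤ _ := key

lemma euler_lower (r : ℕ → ℕ) (hr : Monotone r) (s t : ℕ) (hs : 1 ≤ s) (ht : 1 ≤ t) :
    t ^ s ≤ infoCount (eulerLam r) (s * t)
      (((3:ℝ) ^ ((r (s * t - 1) + 1) * s + 1))⁻¹) := by
  set d := s * t with hd
  set R := r (d - 1) with hR
  set a := (R + 1) * s + 1 with ha
  set ε : ℝ := ((3:ℝ) ^ a)⁻¹ with hε
  have hεpos : 0 < ε := by positivity
  set S := {j : Fin d → ℕ | ε ^ 2 < ∏ k : Fin d, eulerLam r k.val (j k)} with hSdef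
  have hS : S.Finite := euler_set_finite r d hεpos
  have : Finite ↥S := hS.to_subtype
  set e : Fin s × Fin t ≃ Fin (s * t) := finProdFinEquiv with he
  set J : (Fin s → Fin t) → (Fin d → ℕ) :=
    fun v k => if (e.symm k).2 = v (e.symm k).1 then 1 else 0 with hJ
  have hmem : ∀ v, J v ∈ S := by
    intro v
    rw [hSdef, Set.mem_setOf_eq]
    have hprod : ∏ k : Fin d, eulerLam r k.val (J v k)
        = ∏ i : Fin s, eulerLam r (e (i, v i)).val 1 := by
      rw [← Equiv.prod_comp e (fun k => eulerLam r k.val (J v k))]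
      rw [Fintype.prod_prod_type]
      congr 1
      funext i
      have : ∀ b : Fin t, eulerLam r (e (i, b)).val (J v (e (i, b)))
          = if b = v i then eulerLam r (e (i, v i)).val 1 else 1 := by
        intro b
        rw [hJ]
        simp only [Equiv.symm_apply_apply]
        by_cases hb : b = v i
        · simp [hb]
        · simp [hb, eulerLam]
      rw [Finset.prod_congr rfl (fun b _ => this b)]
      simp
    rw [hprod]
    have hfac : ∀ i : Fin s, ((3:ℝ) ^ (2 * R + 2))⁻¹ ≤ eulerLam r (e (i, v i)).val 1 := by
      intro i
      rw [eulerLam_one]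
      apply inv_anti₀ (by positivity)
      apply pow_le_pow_right₀ (by norm_num)
      have : (e (i, v i)).val ≤ d - 1 := by
        have := (e (i, v i)).isLt
        omega
      have := hr this
      omega
    have hge : (((3:ℝ) ^ (2 * R + 2))⁻¹) ^ s ≤ ∏ i : Fin s, eulerLam r (e (i, v i)).val 1 := by
      calc (((3:ℝ) ^ (2 * R + 2))⁻¹) ^ s = ∏ _i : Fin s, ((3:ℝ) ^ (2 * R + 2))⁻¹ := by
            simp
        _ ≤ _ := Finset.prod_le_prod (fun i _ => by positivity) (fun i _ => hfac i)
    refine lt_of_lt_of_le ?_ hge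
    rw [hε, ← inv_pow, ← pow_mul, ← inv_pow, ← pow_mul]
    apply pow_lt_pow_right_of_lt_one₀ (by norm_num) (by norm_num)
    rw [ha]
    nlinarith [hs]
  have hinj : Function.Injective J := by
    intro v v' hvv
    funext i
    have h1 : J v (e (i, v i)) = J v' (e (i, v i)) := by rw [hvv]
    simp only [hJ, Equiv.symm_apply_apply] at h1
    rw [if_pos trivial] at h1
    by_contra hb
    rw [if_neg hb] at h1
    exact one_ne_zero h1
  have hinj' : Function.Injective (fun v : Fin s → Fin t => (⟨J v, hmem v⟩ : ↥S)) := by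
    intro v v' h
    exact hinj (congrArg Subtype.val h)
  have := Nat.card_le_card_of_injective _ hinj'
  rwa [Nat.card_eq_fintype_card, Fintype.card_fun, Fintype.card_fin, Fintype.card_fin] at this

lemma log_ineq (r : ℕ → ℕ) (hr : Monotone r) (C p q : ℝ) (hC : 1 ≤ C) (hp : 1 ≤ p) (hq : 1 ≤ q)
    (hPT : ∀ d : ℕ, 1 ≤ d → ∀ ε : ℝ, ε ∈ Set.Ioo (0:ℝ) 1 →
      (infoCount (eulerLam r) d ε : ℝ) ≤ C * (d:ℝ) ^ q * ε ^ (-p))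
    (s t : ℕ) (hs : 1 ≤ s) (ht : 1 ≤ t) :
    (s:ℝ) * Real.log t ≤ Real.log C + q * Real.log ((s*t : ℕ) : ℝ)
      + (((r (s*t-1) : ℝ) + 1) * s + 1) * (p * Real.log 3) := by
  set d := s * t with hd
  set a := (r (d-1) + 1) * s + 1 with ha
  set ε : ℝ := ((3:ℝ) ^ a)⁻¹ with hε
  have h3a : (1:ℝ) < (3:ℝ) ^ a := one_lt_pow₀ (by norm_num) (by omega)
  have hεmem : ε ∈ Set.Ioo (0:ℝ) 1 := ⟨by positivity, inv_lt_one_of_one_lt₀ h3a⟩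
  have hd1 : 1 ≤ d := Nat.one_le_iff_ne_zero.2 (by positivity)
  have h1 : ((t:ℝ)) ^ s ≤ (infoCount (eulerLam r) d ε : ℝ) := by
    have h := euler_lower r hr s t hs ht
    have h' := Nat.cast_le (α := ℝ) |>.mpr h
    rw [hε, ha, hd]
    push_cast at h' ⊢
    exact h'
  have h2 := hPT d hd1 ε hεmem
  have hεp : ε ^ (-p) = (3:ℝ) ^ ((a:ℝ) * p) := by
    rw [hε, ← Real.rpow_natCast 3 a, ← Real.rpow_neg_one, ← Real.rpow_mul (by norm_num),
      ← Real.rpow_mul (by norm_num)]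
    ring_nf
  have hmain : ((t:ℝ)) ^ s ≤ C * (d:ℝ) ^ q * (3:ℝ) ^ ((a:ℝ) * p) := by
    rw [← hεp]; exact le_trans h1 h2
  have hlog := Real.log_le_log (by positivity : (0:ℝ) < (t:ℝ)^s) hmain
  rw [Real.log_pow] at hlog
  have hdpos : (0:ℝ) < (d:ℝ) := by exact_mod_cast hd1
  have hCpos : (0:ℝ) < C := lt_of_lt_of_le one_pos hC
  rw [Real.log_mul (by positivity) (by positivity),
    Real.log_mul (ne_of_gt hCpos) (by positivity),
    Real.log_rpow hdpos, Real.log_rpow (by norm_num : (0:ℝ) < 3)] at hlog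
  have hacast : (a:ℝ) = ((r (d-1) : ℝ) + 1) * s + 1 := by rw [ha]; push_cast; ring
  rw [hacast] at hlog
  calc (s:ℝ) * Real.log t ≤ Real.log C + q * Real.log (d:ℝ)
        + (((r (d-1) : ℝ) + 1) * s + 1) * p * Real.log 3 := by
        have : (s:ℝ) * Real.log t = (↑s * Real.log ↑t) := rfl
        linarith [hlog]
    _ = _ := by rw [hd]; ring_nf

lemma r_growth (r : ℕ → ℕ) (hr : Monotone r) (C p q : ℝ) (hC : 1 ≤ C) (hp : 1 ≤ p) (hq : 1 ≤ q)
    (hPT : ∀ d : ℕ, 1 ≤ d → ∀ ε : ℝ, ε ∈ Set.Ioo (0:ℝ) 1 →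
      (infoCount (eulerLam r) d ε : ℝ) ≤ C * (d:ℝ) ^ q * ε ^ (-p)) :
    ∀ᶠ n : ℕ in atTop, Real.log n ≤ 4 * p * Real.log 3 * ((r n : ℝ) + 1) := by
  have hlog3 : (0:ℝ) < Real.log 3 := Real.log_pos (by norm_num)
  have hCpos : (0:ℝ) < C := lt_of_lt_of_le one_pos hC
  set A : ℝ := max 80 (4 * (Real.log 2 + Real.log C + 2*q + p * Real.log 3)) with hA
  have hlogtend : Tendsto (fun n : ℕ => Real.log n) atTop atTop :=
    Real.tendsto_log_atTop.comp tendsto_natCast_atTop_atTop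
  filter_upwards [hlogtend.eventually_ge_atTop A, eventually_ge_atTop 9] with n hAn hn9
  set x := Real.log n with hx
  have hx80 : (80:ℝ) ≤ x := le_trans (le_max_left _ _) hAn
  have hA4 : Real.log 2 + Real.log C + 2*q + p * Real.log 3 ≤ x / 4 := by
    have := le_trans (le_max_right _ _) hAn
    linarith
  have hnpos : (0:ℝ) < (n:ℝ) := by
    have : (9:ℝ) ≤ (n:ℝ) := by exact_mod_cast hn9
    linarith
  -- s
  set s : ℕ := ⌊x⌋₊ + 1 with hsdef
  have hs1 : 1 ≤ s := Nat.le_add_left 1 _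
  have hxs : x ≤ (s:ℝ) := by
    have := Nat.lt_floor_add_one x
    rw [hsdef]
    push_cast
    linarith
  have hsx : (s:ℝ) ≤ x + 1 := by
    have := Nat.floor_le (by linarith : (0:ℝ) ≤ x)
    rw [hsdef]
    push_cast
    linarith
  have hspos : (0:ℝ) < (s:ℝ) := by positivity
  -- sqrt n facts
  set u := Real.sqrt n with hu
  have huu : u * u = n := Real.mul_self_sqrt (le_of_lt hnpos)
  have hu3 : (3:ℝ) ≤ u := by
    rw [hu, show (3:ℝ) = Real.sqrt 9 by
      rw [show (9:ℝ) = 3^2 by norm_num, Real.sqrt_sq (by norm_num)]]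
    apply Real.sqrt_le_sqrt
    exact_mod_cast hn9
  have hxu : x ≤ 2 * u - 2 := by
    have h1 : Real.log u ≤ u - 1 := Real.log_le_sub_one_of_pos (by linarith)
    have h2 : Real.log u = x / 2 := by
      rw [hu, Real.log_sqrt (le_of_lt hnpos)]
    linarith
  have h2s : 2 * (s:ℝ) ≤ (n:ℝ) + 1 := by nlinarith
  -- t
  set t : ℕ := (n+1)/s with htdef
  have hts : t * s ≤ n + 1 := Nat.div_mul_le_self _ _
  have hst : s * t ≤ n + 1 := le_trans (le_of_eq (mul_comm s t)) hts
  have hsn : s ≤ n + 1 := by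
    have h' : (s:ℝ) ≤ ((n:ℝ)) + 1 := by linarith
    exact_mod_cast h'
  have ht1 : 1 ≤ t := (Nat.one_le_div_iff (by omega)).2 hsn
  have hst1 : 1 ≤ s * t := Nat.one_le_iff_ne_zero.2 (by positivity)
  have htlb : (n:ℝ) + 1 < (s:ℝ) * (t:ℝ) + (s:ℝ) := by
    have hmod := Nat.div_add_mod (n+1) s
    rw [← htdef] at hmod
    have hmlt : (n+1) % s < s := Nat.mod_lt _ (by omega)
    have hlt : n + 1 < s * t + s := by omega
    have hlt' := (Nat.cast_lt (α := ℝ)).2 hlt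
    push_cast at hlt'
    convert hlt' using 2 <;> norm_cast
  have h2ts : (n:ℝ) + 1 ≤ 2 * (s:ℝ) * (t:ℝ) := by nlinarith
  have htpos : (0:ℝ) < (t:ℝ) := by exact_mod_cast ht1
  -- log bounds
  have hlogs : Real.log s ≤ x / 4 := by
    have h1 : Real.log s ≤ Real.log (x+1) :=
      Real.log_le_log hspos hsx
    set w := Real.sqrt (x+1) with hw
    have hww : w * w = x + 1 := Real.mul_self_sqrt (by linarith)
    have hw9 : (9:ℝ) ≤ w := by
      rw [hw, show (9:ℝ) = Real.sqrt 81 by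
        rw [show (81:ℝ) = 9^2 by norm_num, Real.sqrt_sq (by norm_num)]]
      apply Real.sqrt_le_sqrt
      linarith
    have h2 : Real.log (x+1) = 2 * Real.log w := by
      rw [hw, Real.log_sqrt (by linarith)]; ring
    have h3 : Real.log w ≤ w - 1 := Real.log_le_sub_one_of_pos (by linarith)
    nlinarith
  have hlogt : x - Real.log 2 - Real.log s ≤ Real.log t := by
    have hq1 : (0:ℝ) < ((n:ℝ)+1) / (2*s) := by positivity
    have h1 : ((n:ℝ)+1)/(2*s) ≤ (t:ℝ) := by
      rw [div_le_iff₀ (by positivity)]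
      nlinarith
    have h2 : Real.log (((n:ℝ)+1)/(2*s)) ≤ Real.log t := Real.log_le_log hq1 h1
    rw [Real.log_div (by positivity) (by positivity), Real.log_mul (by norm_num) (ne_of_gt hspos)] at h2
    have h3 : x ≤ Real.log ((n:ℝ)+1) := Real.log_le_log hnpos (by linarith)
    linarith
  have hlogst : Real.log ((s*t : ℕ) : ℝ) ≤ 2 * x := by
    have h1 : ((s*t : ℕ) : ℝ) ≤ (n:ℝ)^2 := by
      have c1 : ((s*t : ℕ) : ℝ) ≤ (n:ℝ) + 1 := by exact_mod_cast hst
      have : (9:ℝ) ≤ (n:ℝ) := by exact_mod_cast hn9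
      nlinarith
    have h2 : Real.log ((s*t : ℕ) : ℝ) ≤ Real.log ((n:ℝ)^2) := by
      apply Real.log_le_log (by exact_mod_cast hst1) h1
    rw [Real.log_pow] at h2
    norm_num at h2
    rw [Nat.cast_mul]
    linarith
  -- main inequality
  have hkey := log_ineq r hr C p q hC hp hq hPT s t hs1 ht1
  have hrm : (r (s*t-1) : ℝ) ≤ (r n : ℝ) := by
    exact_mod_cast hr (by omega : s*t-1 ≤ n)
  set G := ((r n : ℝ) + 1) * p * Real.log 3 with hG
  have hGnn : 0 ≤ G := by positivity
  have hcoef : (((r (s*t-1) : ℝ) + 1) * s + 1) * (p * Real.log 3)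
      ≤ (((r n : ℝ) + 1) * s + 1) * (p * Real.log 3) := by
    apply mul_le_mul_of_nonneg_right _ (by positivity)
    have : ((r (s*t-1) : ℝ) + 1) * s ≤ ((r n : ℝ) + 1) * s :=
      mul_le_mul_of_nonneg_right (by linarith) (le_of_lt hspos)
    linarith
  -- combine
  have hB1 : (s:ℝ) * (3*x/4 - Real.log 2) ≤ (s:ℝ) * Real.log t := by
    apply mul_le_mul_of_nonneg_left _ (le_of_lt hspos)
    linarith
  have hB2 : q * Real.log ((s*t : ℕ) : ℝ) ≤ 2 * q * (s:ℝ) := by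
    have h1 : q * Real.log ((s*t:ℕ):ℝ) ≤ q * (2*x) :=
      mul_le_mul_of_nonneg_left hlogst (by linarith)
    nlinarith
  have hexp : (((r n : ℝ) + 1) * s + 1) * (p * Real.log 3) = G * s + p * Real.log 3 := by
    rw [hG]; ring
  have hmain2 : (s:ℝ) * (3*x/4 - Real.log 2) ≤ 2*q*(s:ℝ) + G * s + (Real.log C + p * Real.log 3) := by
    rw [hexp] at hcoef
    linarith
  -- divide by s
  have hlogCnn : 0 ≤ Real.log C := Real.log_nonneg hC
  have hDnn : (0:ℝ) ≤ Real.log C + p * Real.log 3 := by positivity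
  have hcancel : 3*x/4 - Real.log 2 - 2*q - G ≤ Real.log C + p * Real.log 3 := by
    by_contra hcon
    push_neg at hcon
    have h1 : (0:ℝ) < 3*x/4 - Real.log 2 - 2*q - G := lt_of_le_of_lt hDnn hcon
    have hs1' : (1:ℝ) ≤ (s:ℝ) := by exact_mod_cast hs1
    nlinarith
  have : x / 2 ≤ G := by linarith
  rw [hG] at this
  nlinarith

lemma spt_of_growth (r : ℕ → ℕ) (c : ℝ) (hc : 0 < c)
    (hg : ∀ᶠ n : ℕ in atTop, Real.log n ≤ c * ((r n : ℝ) + 1)) :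
    IsSPT (eulerLam r) := by
  obtain ⟨N, hN⟩ := eventually_atTop.1 hg
  have hlog9 : (0:ℝ) < Real.log 9 := Real.log_pos (by norm_num)
  obtain ⟨τ, hτ1, hτc⟩ : ∃ τ : ℕ, 1 ≤ τ ∧ 2 * c ≤ (τ:ℝ) * Real.log 9 := by
    refine ⟨⌈2 * c / Real.log 9⌉₊ + 1, Nat.le_add_left 1 _, ?_⟩
    have h1 : 2 * c / Real.log 9 ≤ ((⌈2 * c / Real.log 9⌉₊ + 1 : ℕ) : ℝ) := by
      have := Nat.le_ceil (2 * c / Real.log 9)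
      push_cast
      linarith
    calc 2 * c = (2 * c / Real.log 9) * Real.log 9 := by field_simp
      _ ≤ _ := mul_le_mul_of_nonneg_right h1 (le_of_lt hlog9)
  set M : ℕ := max N 1 with hM
  set u : ℕ → ℝ := fun k => if k < M then 1 else 0 with hu
  set w : ℕ → ℝ := fun k => (9:ℝ)^τ * (((k:ℝ))^2)⁻¹ with hw
  have hfw : ∀ k : ℕ, ((9:ℝ) ^ (r k * τ))⁻¹ ≤ u k + w k := by
    intro k
    by_cases hk : k < M
    · have h0 : ((9:ℝ) ^ (r k * τ))⁻¹ ≤ 1 := by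
        rw [inv_le_one_iff₀]; right; exact one_le_pow₀ (by norm_num)
      have hw0 : 0 ≤ w k := by rw [hw]; positivity
      rw [hu]; simp only [if_pos hk]
      linarith
    · push_neg at hk
      have hkN := hN k (le_trans (le_max_left _ _) hk)
      have hk1 : 1 ≤ k := le_trans (le_max_right _ _) hk
      have hkpos : (0:ℝ) < (k:ℝ) := by exact_mod_cast hk1
      have key : ((9:ℝ) ^ (r k * τ))⁻¹ ≤ (9:ℝ)^τ * (((k:ℝ))^2)⁻¹ := by
        have e1 : ((9:ℝ) ^ (r k * τ))⁻¹ = Real.exp (-(((r k * τ : ℕ):ℝ) * Real.log 9)) := by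
          rw [← Real.log_pow, Real.exp_neg, Real.exp_log (by positivity)]
        have e2a : (9:ℝ)^τ = Real.exp ((τ:ℝ) * Real.log 9) := by
          rw [← Real.log_pow, Real.exp_log (by positivity)]
        have e2b : (((k:ℝ))^2)⁻¹ = Real.exp (-(((2:ℕ):ℝ) * Real.log k)) := by
          rw [← Real.log_pow, Real.exp_neg, Real.exp_log (by positivity)]
        rw [e1, e2a, e2b, ← Real.exp_add]
        apply Real.exp_le_exp.2
        have h1 : 2 * Real.log k ≤ 2 * c * ((r k : ℝ) + 1) := by linarith
        have h2 : 2 * c * ((r k : ℝ) + 1) ≤ (τ:ℝ) * Real.log 9 * ((r k : ℝ) + 1) := by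
          apply mul_le_mul_of_nonneg_right hτc
          positivity
        have h3 : (0:ℝ) ≤ (r k : ℝ) := Nat.cast_nonneg _
        push_cast
        nlinarith
      rw [hu]; simp only [if_neg (not_lt.2 hk)]
      rw [hw]
      linarith
  -- summability of the majorant
  have hu_sum : Summable u := by
    apply summable_of_ne_finset_zero (s := Finset.range M)
    intro k hk
    rw [hu]
    simp only [Finset.mem_range, not_lt] at hk
    simp [Nat.not_lt.2 hk]
  have hw_sum : Summable w := by
    apply Summable.mul_left
    have := (Real.summable_one_div_nat_pow (p := 2)).2 (by norm_num)
    simpa [one_div] using this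
  have hg_sum : Summable (fun k => u k + w k) := hu_sum.add hw_sum
  set Ag : ℝ := ∑' k, (u k + w k) with hAg
  have hterm_nonneg : ∀ k, (0:ℝ) ≤ u k + w k := by
    intro k
    have : (0:ℝ) ≤ u k := by rw [hu]; positivity
    have : (0:ℝ) ≤ w k := by rw [hw]; positivity
    have : (0:ℝ) ≤ u k := by rw [hu]; positivity
    rw [hu, hw]; positivity
  -- SPT
  refine ⟨Real.exp (baselB * Ag), 2 * τ, (Real.exp_pos _).le, by positivity, ?_⟩
  intro d hd ε hε
  obtain ⟨hε0, hε1⟩ := hε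
  have h1 := infoCount_le_prod r τ hτ1 d hε0
  have h2 : ∏ k : Fin d, ∑' j : ℕ, eulerLam r k.val j ^ τ ≤ Real.exp (baselB * Ag) := by
    calc ∏ k : Fin d, ∑' j : ℕ, eulerLam r k.val j ^ τ
        ≤ ∏ k : Fin d, Real.exp (baselB * (((9:ℝ) ^ (r k.val * τ))⁻¹)) := by
          apply Finset.prod_le_prod
          · intro k _
            exact tsum_nonneg (fun j => pow_nonneg (eulerLam_pos r k.val j).le τ)
          · intro k _
            calc ∑' j : ℕ, eulerLam r k.val j ^ τ
                ≤ 1 + baselB * (((9:ℝ) ^ (r k.val * τ))⁻¹) := euler_tsum_le r k.val τ hτ1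
              _ ≤ Real.exp (baselB * (((9:ℝ) ^ (r k.val * τ))⁻¹)) := by
                  have := Real.add_one_le_exp (baselB * (((9:ℝ) ^ (r k.val * τ))⁻¹))
                  linarith
      _ = Real.exp (∑ k : Fin d, baselB * (((9:ℝ) ^ (r k.val * τ))⁻¹)) :=
          (Real.exp_sum _ _).symm
      _ ≤ Real.exp (baselB * Ag) := by
          apply Real.exp_le_exp.2
          rw [← Finset.mul_sum]
          apply mul_le_mul_of_nonneg_left _ baselB_nonneg
          calc ∑ k : Fin d, ((9:ℝ) ^ (r k.val * τ))⁻¹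
              ≤ ∑ k : Fin d, (u k.val + w k.val) :=
                Finset.sum_le_sum (fun k _ => hfw k.val)
            _ = ∑ k ∈ Finset.range d, (u k + w k) :=
                Fin.sum_univ_eq_sum_range (fun k => u k + w k) d
            _ ≤ Ag := Summable.sum_le_tsum _ (fun k _ => hterm_nonneg k) hg_sum
  have hεrw : ε ^ (-(2 * τ : ℝ)) = (ε ^ (2 * τ))⁻¹ := by
    rw [Real.rpow_neg hε0.le]
    congr 1
    rw [show ((2 * τ : ℝ)) = ((2 * τ : ℕ) : ℝ) by push_cast; ring, Real.rpow_natCast]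
  calc (infoCount (eulerLam r) d ε : ℝ)
      ≤ (ε ^ (2 * τ))⁻¹ * ∏ k : Fin d, ∑' j : ℕ, eulerLam r k.val j ^ τ := h1
    _ ≤ (ε ^ (2 * τ))⁻¹ * Real.exp (baselB * Ag) := by
        apply mul_le_mul_of_nonneg_left h2
        positivity
    _ = Real.exp (baselB * Ag) * ε ^ (-(2 * τ : ℝ)) := by rw [hεrw]; ring

/-- Euler kernels, normalized error criterion: SPT iff PT. -/
theorem euler_spt_iff_pt (r : ℕ → ℕ) (hr : Monotone r) :
    IsSPT (eulerLam r) ↔ IsPT (eulerLam r) := by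
  constructor
  · rintro ⟨C, p, hC, hp, h⟩
    refine ⟨C, p, 0, hC, hp, le_refl 0, fun d hd ε hε => ?_⟩
    have := h d hd ε hε
    rw [Real.rpow_zero, mul_one]
    exact this
  · rintro ⟨C0, p0, q0, hC0, hp0, hq0, h0⟩
    set C := max C0 1 with hCdef
    set p := max p0 1 with hpdef
    set q := max q0 1 with hqdef
    have hC : 1 ≤ C := le_max_right _ _
    have hp : 1 ≤ p := le_max_right _ _
    have hq : 1 ≤ q := le_max_right _ _
    have hPT : ∀ d : ℕ, 1 ≤ d → ∀ ε : ℝ, ε ∈ Set.Ioo (0:ℝ) 1 →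
        (infoCount (eulerLam r) d ε : ℝ) ≤ C * (d:ℝ) ^ q * ε ^ (-p) := by
      intro d hd ε hε
      obtain ⟨hε0, hε1⟩ := hε
      have hd1 : (1:ℝ) ≤ (d:ℝ) := by exact_mod_cast hd
      calc (infoCount (eulerLam r) d ε : ℝ)
          ≤ C0 * (d:ℝ) ^ q0 * ε ^ (-p0) := h0 d hd ε ⟨hε0, hε1⟩
        _ ≤ C * (d:ℝ) ^ q * ε ^ (-p) := by
            have h1 : C0 ≤ C := le_max_left _ _
            have h2 : (d:ℝ) ^ q0 ≤ (d:ℝ) ^ q :=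
              Real.rpow_le_rpow_of_exponent_le hd1 (le_max_left _ _)
            have h3 : ε ^ (-p0) ≤ ε ^ (-p) :=
              Real.rpow_le_rpow_of_exponent_ge hε0 hε1.le (neg_le_neg (le_max_left _ _))
            have hd0 : (0:ℝ) ≤ (d:ℝ)^q0 := Real.rpow_nonneg (by linarith) _
            have hε0' : (0:ℝ) ≤ ε ^ (-p0) := Real.rpow_nonneg hε0.le _
            have hC0' : (0:ℝ) ≤ C := by linarith
            apply mul_le_mul (mul_le_mul h1 h2 hd0 hC0') h3 hε0'
            have := Real.rpow_nonneg (by linarith : (0:ℝ) ≤ (d:ℝ)) q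
            nlinarith
    have hgrow := r_growth r hr C p q hC hp hq hPT
    have hlog3 : (0:ℝ) < Real.log 3 := Real.log_pos (by norm_num)
    exact spt_of_growth r (4 * p * Real.log 3) (by nlinarith) hgrow
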